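/- Let f : V₁ → V₂ be a map between vertex sets of weighted directed graphs G₁† and G₂† (each with a root, r₁ and r₂, with f(r₁) = r₂) such that for every edge (p, q) of G₁† of weight w there is an edge (f(p), f(q)) of weight at most w in G₂†, and f is surjective onto V₂ with every vertex of G₂ being the image of some vertex, and moreover f restricted to a distinguished subset W ⊆ V₁ with f(W) = V₂ is such that f(v) = v for all v ∈ W ⊆ V₂. Then the minimum weight of a spanning arborescence of G₂† converging to r₂ is at most the minimum weight of a spanning arborescence of G₁† converging to r₁. -/
import Mathlib


/-- Rooted spanning arborescence converging to `r` inside the vertex type: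
every non-root vertex has its unique outgoing edge `(v, f v)` in the graph,
and every vertex reaches the root by iterating the parent map. -/
def IsArbR {V : Type*} (G : V → V → Prop) (r : V) (f : V → V) : Prop :=
  (∀ v, v ≠ r → G v (f v)) ∧ ∀ v, ∃ n : ℕ, f^[n] v = r

/-- Total weight of a rooted arborescence. -/
def arbWeightR {V : Type*} [Fintype V] [DecidableEq V]
    (w : V → V → ℕ) (r : V) (f : V → V) : ℕ :=
  ∑ v ∈ Finset.univ.filter (· ≠ r), w v (f v)

/-- Minimum-weight rooted spanning arborescence converging to `r`. -/
def IsMinArbR {V : Type*} [Fintype V] [DecidableEq V] (G : V → V → Prop)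
    (w : V → V → ℕ) (r : V) (f : V → V) : Prop :=
  IsArbR G r f ∧ ∀ g : V → V, IsArbR G r g → arbWeightR w r f ≤ arbWeightR w r g

/-- If `f : V₁ → V₂` (with `V₂ = W` a distinguished subset of `V₁`) maps the
root to the root, fixes every vertex of `W` (hence is surjective onto `V₂`),
and maps every weight-`w` edge of `G₁` to an edge of `G₂` of weight at most
`w`, then the minimum weight of a spanning arborescence of `G₂` converging to
`r₂` is at most that of `G₁` converging to `r₁`. -/
theorem stmt4 {V : Type*} [Fintype V] [DecidableEq V] (W : Set V) [Fintype W]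
    (G₁ : V → V → Prop) (G₂ : W → W → Prop)
    (w₁ : V → V → ℕ) (w₂ : W → W → ℕ)
    (r₁ : V) (r₂ : W) (f : V → W)
    (hroot : f r₁ = r₂)
    (hfix : ∀ v : W, f v = v)
    (hedge : ∀ p q : V, G₁ p q → G₂ (f p) (f q) ∧ w₂ (f p) (f q) ≤ w₁ p q)
    (T₁ : V → V) (T₂ : W → W)
    (h₁ : IsMinArbR G₁ w₁ r₁ T₁) (h₂ : IsMinArbR G₂ w₂ r₂ T₂) :
    arbWeightR w₂ r₂ T₂ ≤ arbWeightR w₁ r₁ T₁ := by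
  classical
  have hP : ∀ v : W, ∃ m : ℕ, ∃ x : V, f x = v ∧ f (T₁^[m] x) = r₂ := by
    intro v
    obtain ⟨n, hn⟩ := h₁.1.2 (v : V)
    exact ⟨n, v, hfix v, by rw [hn, hroot]⟩
  let D : W → ℕ := fun v => Nat.find (hP v)
  have hxspec := fun v : W => Nat.find_spec (hP v)
  let x : W → V := fun v => (hxspec v).choose
  have hx1 : ∀ v : W, f (x v) = v := fun v => (hxspec v).choose_spec.1
  have hx2 : ∀ v : W, f (T₁^[D v] (x v)) = r₂ := fun v => (hxspec v).choose_spec.2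
  let g : W → W := fun v => if v = r₂ then r₂ else f (T₁ (x v))
  have hgv : ∀ v : W, v ≠ r₂ → g v = f (T₁ (x v)) := fun v hv => if_neg hv
  have hDpos : ∀ v : W, v ≠ r₂ → 0 < D v := by
    intro v hv
    rcases Nat.eq_zero_or_pos (D v) with h0 | h
    · exfalso
      have h2 := hx2 v
      rw [h0, Function.iterate_zero_apply] at h2
      exact hv ((hx1 v).symm.trans h2)
    · exact h
  have hdec : ∀ v : W, v ≠ r₂ → D (g v) < D v := by
    intro v hv
    have hex : ∃ x' : V, f x' = g v ∧ f (T₁^[D v - 1] x') = r₂ := by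
      refine ⟨T₁ (x v), (hgv v hv).symm, ?_⟩
      have h3 : T₁^[D v - 1] (T₁ (x v)) = T₁^[D v] (x v) := by
        have h4 : D v - 1 + 1 = D v := Nat.succ_pred_eq_of_pos (hDpos v hv)
        conv_rhs => rw [← h4]
        rw [Function.iterate_succ_apply]
      rw [h3]; exact hx2 v
    calc D (g v) ≤ D v - 1 := Nat.find_le hex
      _ < D v := Nat.sub_lt (hDpos v hv) one_pos
  have hconv : ∀ (m : ℕ) (v : W), D v ≤ m → ∃ n, g^[n] v = r₂ := by
    intro m
    induction m with
    | zero =>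
      intro v hv
      by_cases h : v = r₂
      · exact ⟨0, h⟩
      · exact absurd (Nat.le_zero.mp hv) (Nat.pos_iff_ne_zero.mp (hDpos v h))
    | succ m ih =>
      intro v hv
      by_cases h : v = r₂
      · exact ⟨0, h⟩
      · obtain ⟨n, hn⟩ := ih (g v) (by have := hdec v h; omega)
        exact ⟨n + 1, by rw [Function.iterate_succ_apply, hn]⟩
  have hxne : ∀ v : W, v ≠ r₂ → x v ≠ r₁ := by
    intro v hv h
    apply hv
    rw [← hx1 v, h, hroot]
  have harb : IsArbR G₂ r₂ g := by
    constructor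
    · intro v hv
      have he := (hedge (x v) (T₁ (x v)) (h₁.1.1 (x v) (hxne v hv))).1
      rw [hx1 v] at he
      rw [hgv v hv]
      exact he
    · intro v
      exact hconv (D v) v le_rfl
  have hw : arbWeightR w₂ r₂ g ≤ arbWeightR w₁ r₁ T₁ := by
    unfold arbWeightR
    calc ∑ v ∈ Finset.univ.filter (· ≠ r₂), w₂ v (g v)
        ≤ ∑ v ∈ Finset.univ.filter (· ≠ r₂), w₁ (x v) (T₁ (x v)) := by
          apply Finset.sum_le_sum
          intro v hv
          have hv' : v ≠ r₂ := (Finset.mem_filter.mp hv).2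
          have he := (hedge (x v) (T₁ (x v)) (h₁.1.1 (x v) (hxne v hv'))).2
          rw [hx1 v] at he
          rw [hgv v hv']
          exact he
      _ = ∑ u ∈ (Finset.univ.filter (· ≠ r₂)).image x, w₁ u (T₁ u) := by
          rw [Finset.sum_image]
          intro a _ b _ hab
          have := congrArg f hab
          rw [hx1, hx1] at this
          exact this
      _ ≤ ∑ u ∈ Finset.univ.filter (· ≠ r₁), w₁ u (T₁ u) := by
          apply Finset.sum_le_sum_of_subset
          intro u hu
          simp only [Finset.mem_image, Finset.mem_filter, Finset.mem_univ, true_and] at hu ⊢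
          obtain ⟨v, hv, rfl⟩ := hu
          exact hxne v hv
  exact le_trans (h₂.2 g harb) hw
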